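/- Let p ≥ 1 be an integer, let W be a nonnegative real random variable with E[W^{2p-j-k}] ≥ s^{2p-j-k} for all 1 ≤ j,k ≤ p-1 where s ≥ 0, and let t ≥ 0. Then E[((W + t)^p - W^p)²] ≥ ((s + t)^p - s^p)² / 2. -/
import Mathlib


open MeasureTheory Finset

lemma expand_pow_aux (p : ℕ) (w t : ℝ) :
    (w + t) ^ p - w ^ p = ∑ k ∈ Finset.range p, (p.choose k : ℝ) * w ^ k * t ^ (p - k) := by
  rw [add_pow, Finset.sum_range_succ, Nat.sub_self, pow_zero, Nat.choose_self,
    Nat.cast_one, mul_one, mul_one, add_sub_cancel_right]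
  exact Finset.sum_congr rfl fun k _ => by ring

lemma expand_sq_aux (p : ℕ) (w t : ℝ) :
    ((w + t) ^ p - w ^ p) ^ 2 =
      ∑ j ∈ Finset.range p, ∑ k ∈ Finset.range p,
        (p.choose j : ℝ) * (p.choose k) * t ^ (2 * p - j - k) * w ^ (j + k) := by
  rw [expand_pow_aux, sq, Finset.sum_mul_sum]
  refine Finset.sum_congr rfl fun j hj => Finset.sum_congr rfl fun k hk => ?_
  rw [Finset.mem_range] at hj hk
  rw [show 2 * p - j - k = (p - j) + (p - k) by omega, pow_add]
  ring

theorem moment_lower_bound {Ω : Type*} [MeasureSpace Ω]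
    [IsProbabilityMeasure (volume : Measure Ω)]
    (p : ℕ) (hp : 1 ≤ p) (W : Ω → ℝ) (hW : ∀ ω, 0 ≤ W ω)
    (s t : ℝ) (hs : 0 ≤ s) (ht : 0 ≤ t)
    (hmom : ∀ j k : ℕ, 1 ≤ j → j ≤ p - 1 → 1 ≤ k → k ≤ p - 1 →
      s ^ (2 * p - j - k) ≤ ∫ ω, W ω ^ (2 * p - j - k))
    (hint : Integrable (fun ω => ((W ω + t) ^ p - W ω ^ p) ^ 2))
    (hintpow : ∀ m : ℕ, m ≤ 2 * p → Integrable (fun ω => W ω ^ m)) :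
    ((s + t) ^ p - s ^ p) ^ 2 / 2 ≤ ∫ ω, ((W ω + t) ^ p - W ω ^ p) ^ 2 := by
  classical
  obtain ⟨q, rfl⟩ : ∃ q, p = q + 1 := ⟨p - 1, by omega⟩
  -- expand the integral as a double sum of moments
  have key : ∫ ω, ((W ω + t) ^ (q+1) - W ω ^ (q+1)) ^ 2
      = ∑ j ∈ range (q+1), ∑ k ∈ range (q+1),
          ((q+1).choose j : ℝ) * ((q+1).choose k) * t ^ (2*(q+1) - j - k)
            * ∫ ω, W ω ^ (j + k) := by
    have h2 : ∀ j ∈ range (q+1), ∀ k ∈ range (q+1),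
        Integrable (fun ω => ((q+1).choose j : ℝ) * ((q+1).choose k)
          * t ^ (2*(q+1) - j - k) * W ω ^ (j + k)) := by
      intro j hj k hk
      rw [mem_range] at hj hk
      exact (hintpow (j+k) (by omega)).const_mul _
    have h1 : ∀ j ∈ range (q+1), Integrable (fun ω => ∑ k ∈ range (q+1),
        ((q+1).choose j : ℝ) * ((q+1).choose k) * t ^ (2*(q+1) - j - k) * W ω ^ (j + k)) := by
      intro j hj
      exact integrable_finset_sum _ (fun k hk => h2 j hj k hk)
    calc ∫ ω, ((W ω + t) ^ (q+1) - W ω ^ (q+1)) ^ 2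
        = ∫ ω, ∑ j ∈ range (q+1), ∑ k ∈ range (q+1),
            ((q+1).choose j : ℝ) * ((q+1).choose k) * t ^ (2*(q+1) - j - k)
              * W ω ^ (j + k) := by
          simp_rw [expand_sq_aux]
      _ = ∑ j ∈ range (q+1), ∫ ω, ∑ k ∈ range (q+1),
            ((q+1).choose j : ℝ) * ((q+1).choose k) * t ^ (2*(q+1) - j - k)
              * W ω ^ (j + k) := integral_finset_sum _ h1
      _ = ∑ j ∈ range (q+1), ∑ k ∈ range (q+1),
            ((q+1).choose j : ℝ) * ((q+1).choose k) * t ^ (2*(q+1) - j - k)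
              * ∫ ω, W ω ^ (j + k) := by
          refine Finset.sum_congr rfl fun j hj => ?_
          rw [integral_finset_sum _ (fun k hk => h2 j hj k hk)]
          exact Finset.sum_congr rfl fun k hk => integral_const_mul _ _
  -- bound each moment below
  have hbound : ∀ j ∈ range (q+1), ∀ k ∈ range (q+1),
      (if j = 0 ↔ k = 0 then s ^ (j+k) else 0) ≤ ∫ ω, W ω ^ (j + k) := by
    intro j hj k hk
    rw [mem_range] at hj hk
    by_cases hj0 : j = 0 <;> by_cases hk0 : k = 0
    · subst hj0; subst hk0; simp
    · rw [if_neg (by simp [hj0, hk0])]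
      exact integral_nonneg fun ω => pow_nonneg (hW ω) _
    · rw [if_neg (by simp [hj0, hk0])]
      exact integral_nonneg fun ω => pow_nonneg (hW ω) _
    · rw [if_pos (by simp [hj0, hk0])]
      have := hmom (q+1-j) (q+1-k) (by omega) (by omega) (by omega) (by omega)
      rwa [show 2*(q+1) - (q+1-j) - (q+1-k) = j + k from by omega] at this
  have hsum : ∑ j ∈ range (q+1), ∑ k ∈ range (q+1),
        ((q+1).choose j : ℝ) * ((q+1).choose k) * t ^ (2*(q+1) - j - k)
          * (if j = 0 ↔ k = 0 then s ^ (j+k) else 0)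
      ≤ ∑ j ∈ range (q+1), ∑ k ∈ range (q+1),
        ((q+1).choose j : ℝ) * ((q+1).choose k) * t ^ (2*(q+1) - j - k)
          * ∫ ω, W ω ^ (j + k) := by
    refine Finset.sum_le_sum fun j hj => Finset.sum_le_sum fun k hk => ?_
    exact mul_le_mul_of_nonneg_left (hbound j hj k hk) (by positivity)
  -- evaluate the lower-bound sum
  set u : ℕ → ℝ := fun k => ((q+1).choose k : ℝ) * s ^ k * t ^ (q + 1 - k) with hu
  have hA : (s + t) ^ (q+1) - s ^ (q+1) = ∑ k ∈ range (q+1), u k := expand_pow_aux (q+1) s t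
  have hu0 : u 0 = t ^ (q+1) := by simp [hu]
  have hA' : ∑ j ∈ range q, u (j+1) = ((s+t)^(q+1) - s^(q+1)) - t^(q+1) := by
    rw [hA, Finset.sum_range_succ', hu0]
    ring
  have heval : ∑ j ∈ range (q+1), ∑ k ∈ range (q+1),
        ((q+1).choose j : ℝ) * ((q+1).choose k) * t ^ (2*(q+1) - j - k)
          * (if j = 0 ↔ k = 0 then s ^ (j+k) else 0)
      = (∑ j ∈ range q, u (j+1)) ^ 2 + (t^(q+1))^2 := by
    rw [Finset.sum_range_succ']
    have hinner0 : (∑ k ∈ range (q+1), ((q+1).choose 0 : ℝ) * ((q+1).choose k)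
        * t ^ (2*(q+1) - 0 - k) * (if (0:ℕ) = 0 ↔ k = 0 then s ^ (0+k) else 0))
        = (t^(q+1))^2 := by
      rw [Finset.sum_range_succ']
      have hz : ∀ k ∈ range q, (((q+1).choose 0 : ℝ) * ((q+1).choose (k+1))
          * t ^ (2*(q+1) - 0 - (k+1)) * (if (0:ℕ) = 0 ↔ (k+1) = 0 then s ^ (0+(k+1)) else 0))
          = 0 := by
        intro k _
        rw [if_neg (by simp), mul_zero]
      rw [Finset.sum_eq_zero hz, zero_add, if_pos (by simp)]
      simp only [Nat.choose_zero_right, Nat.cast_one, one_mul, Nat.sub_zero, add_zero,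
        pow_zero, mul_one]
      rw [two_mul, pow_add, sq]
    have hinner : ∀ j ∈ range q, (∑ k ∈ range (q+1), ((q+1).choose (j+1) : ℝ)
        * ((q+1).choose k) * t ^ (2*(q+1) - (j+1) - k)
        * (if (j+1) = 0 ↔ k = 0 then s ^ ((j+1)+k) else 0))
        = u (j+1) * ∑ k ∈ range q, u (k+1) := by
      intro j hj
      rw [mem_range] at hj
      rw [Finset.sum_range_succ']
      rw [if_neg (by simp), mul_zero, add_zero, Finset.mul_sum]
      refine Finset.sum_congr rfl fun k hk => ?_
      rw [mem_range] at hk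
      rw [if_pos (by simp)]
      simp only [hu]
      rw [show 2*(q+1) - (j+1) - (k+1) = (q + 1 - (j+1)) + (q + 1 - (k+1)) from by omega,
        pow_add, show (j+1) + (k+1) = (j+1) + (k+1) from rfl, pow_add]
      ring
    rw [Finset.sum_congr rfl hinner, hinner0, ← Finset.sum_mul]
    ring
  -- combine
  rw [key]
  refine le_trans ?_ hsum
  rw [heval, hA']
  nlinarith [sq_nonneg (((s+t)^(q+1) - s^(q+1)) - 2 * t^(q+1)), sq_nonneg ((s+t)^(q+1) - s^(q+1))]
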